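/- Let c, d, i be vectors in ℝ² and let f₁, f₂ be linear functionals on ℝ² satisfying f₁(c) = 0, f₂(d) = 0, f₁(d) < 0, f₂(c) < 0, f₁(i) < 0, and f₂(i) < 0. Then for every nonzero linear functional g on ℝ² with g(i) = 0, one has g(c) · g(d) < 0; that is, c and d lie strictly on opposite sides of the line through the origin and i. -/
import Mathlib


/-- If `f₁, f₂` are linear functionals on `ℝ²` with `f₁ c = 0`, `f₂ d = 0`,
`f₁ d < 0`, `f₂ c < 0`, `f₁ i < 0`, `f₂ i < 0`, then every nonzero linear functional `g`
vanishing at `i` satisfies `g c * g d < 0`. -/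
theorem stmt0 (c d i : Fin 2 → ℝ) (f₁ f₂ : (Fin 2 → ℝ) →ₗ[ℝ] ℝ)
    (h1c : f₁ c = 0) (h2d : f₂ d = 0)
    (h1d : f₁ d < 0) (h2c : f₂ c < 0)
    (h1i : f₁ i < 0) (h2i : f₂ i < 0) :
    ∀ g : (Fin 2 → ℝ) →ₗ[ℝ] ℝ, g ≠ 0 → g i = 0 → g c * g d < 0 := by
  intro g hg hgi
  have eval : ∀ (f : (Fin 2 → ℝ) →ₗ[ℝ] ℝ) (x : Fin 2 → ℝ),
      f x = x 0 * f (Pi.single 0 1) + x 1 * f (Pi.single 1 1) := by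
    intro f x
    have hx : x = x 0 • (Pi.single 0 1 : Fin 2 → ℝ) + x 1 • (Pi.single 1 1 : Fin 2 → ℝ) := by
      funext j; fin_cases j <;> simp
    conv_lhs => rw [hx]
    simp
  have e1c := eval f₁ c; rw [h1c] at e1c
  have e2c := eval f₂ c
  have e1d := eval f₁ d
  have e2d := eval f₂ d; rw [h2d] at e2d
  have hkey : f₁ d * f₂ c =
      (f₁ (Pi.single 0 1) * f₂ (Pi.single 1 1) - f₁ (Pi.single 1 1) * f₂ (Pi.single 0 1)) *
        (c 1 * d 0 - c 0 * d 1) := by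
    linear_combination f₂ c * e1d + (d 0 * f₁ (Pi.single 0 1) + d 1 * f₁ (Pi.single 1 1)) * e2c
      - (d 0 * f₂ (Pi.single 0 1) + d 1 * f₂ (Pi.single 1 1)) * e1c
  have hD : f₁ (Pi.single 0 1) * f₂ (Pi.single 1 1) - f₁ (Pi.single 1 1) * f₂ (Pi.single 0 1) ≠ 0 := by
    intro h
    rw [h, zero_mul] at hkey
    exact absurd hkey (ne_of_gt (mul_pos_of_neg_of_neg h1d h2c))
  set D := f₁ (Pi.single 0 1) * f₂ (Pi.single 1 1) - f₁ (Pi.single 1 1) * f₂ (Pi.single 0 1) with hDdef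
  set A := (g (Pi.single 0 1) * f₂ (Pi.single 1 1) - g (Pi.single 1 1) * f₂ (Pi.single 0 1)) / D with hA
  set B := (f₁ (Pi.single 0 1) * g (Pi.single 1 1) - f₁ (Pi.single 1 1) * g (Pi.single 0 1)) / D with hB
  have key : ∀ x, g x = A * f₁ x + B * f₂ x := by
    intro x
    rw [eval g x, eval f₁ x, eval f₂ x, hA, hB]
    field_simp
    ring
  have hgi' := key i; rw [hgi] at hgi'
  have hgc := key c; rw [h1c] at hgc
  have hgd := key d; rw [h2d] at hgd
  have hβ : B ≠ 0 := by
    intro h0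
    have hα : A = 0 := by
      rw [h0] at hgi'
      have : A * f₁ i = 0 := by linarith
      rcases mul_eq_zero.1 this with h | h
      · exact h
      · exact absurd h (ne_of_lt h1i)
    apply hg
    apply LinearMap.ext
    intro x
    rw [key x, hα, h0]
    simp
  have hB2 : 0 < B ^ 2 := lt_of_le_of_ne (sq_nonneg B) (Ne.symm (pow_ne_zero 2 hβ))
  have h5 : A * B * f₁ i + B ^ 2 * f₂ i = 0 := by linear_combination (-B) * hgi'
  have hAB : A * B < 0 := by nlinarith [mul_pos hB2 (neg_pos.2 h2i)]
  rw [hgc, hgd]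
  nlinarith [mul_neg_of_neg_of_pos hAB (mul_pos_of_neg_of_neg h2c h1d)]
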